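/- Suppose M is determined by Y_{[k]}, i.e., H(M | Y_{[k]}) = 0. Then for every integer r with 1 ≤ r ≤ k, Σ_{S ⊆ {1,…,k}, |S| = r} H(M | Y_S, X) ≤ ((k−r)/k) · C(k,r) · H(Y_{[k]} | X); equivalently, the average of H(M | Y_S, X) over all r-element subsets S is at most ((k−r)/k) · H(Y_{[k]} | X). -/

import Mathlib

open Finset

/-- Probability that the finitely-valued random variable `X` takes value `x`,
with respect to the probability mass function `p` on the finite sample space `Ω`. -/
noncomputable def pmfProb {Ω : Type*} [Fintype Ω] {α : Type*} [Fintype α] [DecidableEq α]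
    (p : Ω → ℝ) (X : Ω → α) (x : α) : ℝ :=
  ∑ ω, if X ω = x then p ω else 0

/-- Shannon entropy (natural logarithm) of the random variable `X`. -/
noncomputable def entH {Ω : Type*} [Fintype Ω] {α : Type*} [Fintype α] [DecidableEq α]
    (p : Ω → ℝ) (X : Ω → α) : ℝ :=
  ∑ x, Real.negMulLog (pmfProb p X x)

/-- Conditional Shannon entropy `H(X|Y) = H(X,Y) - H(Y)`. -/
noncomputable def condH {Ω : Type*} [Fintype Ω] {α β : Type*} [Fintype α] [DecidableEq α]
    [Fintype β] [DecidableEq β] (p : Ω → ℝ) (X : Ω → α) (Y : Ω → β) : ℝ :=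
  entH p (fun ω => (X ω, Y ω)) - entH p Y

/-- Mutual information `I(X;Y) = H(X) + H(Y) - H(X,Y)`. -/
noncomputable def mutInfo {Ω : Type*} [Fintype Ω] {α β : Type*} [Fintype α] [DecidableEq α]
    [Fintype β] [DecidableEq β] (p : Ω → ℝ) (X : Ω → α) (Y : Ω → β) : ℝ :=
  entH p X + entH p Y - entH p (fun ω => (X ω, Y ω))

/-- The conditional probability mass function given an event `E`. -/
noncomputable def condPMF {Ω : Type*} [Fintype Ω] (p : Ω → ℝ) (E : Ω → Prop)
    [DecidablePred E] : Ω → ℝ :=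
  fun ω => if E ω then p ω / (∑ ω' ∈ Finset.univ.filter E, p ω') else 0



set_option linter.unusedSectionVars false
set_option maxHeartbeats 1000000

section entropyHelpers
variable {Ω : Type*} [Fintype Ω] {α β γ δ : Type*} [Fintype α] [DecidableEq α]
  [Fintype β] [DecidableEq β] [Fintype γ] [DecidableEq γ] [Fintype δ] [DecidableEq δ]
variable {p : Ω → ℝ}

lemma pmfProb_nonneg (hp : ∀ ω, 0 ≤ p ω) (V : Ω → α) (x : α) : 0 ≤ pmfProb p V x :=
  Finset.sum_nonneg fun ω _ => by split <;> simp [hp ω]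

lemma le_pmfProb (hp : ∀ ω, 0 ≤ p ω) (V : Ω → α) (ω : Ω) : p ω ≤ pmfProb p V (V ω) := by
  classical
  have := Finset.single_le_sum (f := fun ω' => if V ω' = V ω then p ω' else 0)
    (fun i _ => by split <;> simp [hp i]) (Finset.mem_univ ω)
  simpa [pmfProb] using this

lemma sum_pmfProb (V : Ω → α) : ∑ x, pmfProb p V x = ∑ ω, p ω := by
  unfold pmfProb
  rw [Finset.sum_comm]
  simp

lemma sum_fiber (V : Ω → α) (f : α → ℝ) :
    ∑ x, pmfProb p V x * f x = ∑ ω, p ω * f (V ω) := by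
  unfold pmfProb
  simp only [Finset.sum_mul, ite_mul, zero_mul]
  rw [Finset.sum_comm]
  refine Finset.sum_congr rfl fun ω _ => ?_
  simp

lemma entH_eq (V : Ω → α) :
    entH p V = ∑ ω, p ω * (-Real.log (pmfProb p V (V ω))) := by
  rw [← sum_fiber (p := p) V (fun x => -Real.log (pmfProb p V x))]
  unfold entH Real.negMulLog
  exact Finset.sum_congr rfl fun x _ => by ring

lemma entH_congr {V : Ω → α} {W : Ω → β}
    (h : ∀ ω ω', V ω = V ω' ↔ W ω = W ω') : entH p V = entH p W := by
  have hP : ∀ ω, pmfProb p V (V ω) = pmfProb p W (W ω) := by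
    intro ω; unfold pmfProb
    exact Finset.sum_congr rfl fun ω' _ => if_congr (h ω' ω) rfl rfl
  rw [entH_eq, entH_eq]
  exact Finset.sum_congr rfl fun ω _ => by rw [hP]

lemma entH_mono (hp : ∀ ω, 0 ≤ p ω) {V : Ω → α} {W : Ω → β}
    (h : ∀ ω ω', W ω = W ω' → V ω = V ω') : entH p V ≤ entH p W := by
  rw [entH_eq, entH_eq]
  refine Finset.sum_le_sum fun ω _ => ?_
  rcases eq_or_lt_of_le (hp ω) with h0 | h0
  · simp [← h0]
  · have hWV : pmfProb p W (W ω) ≤ pmfProb p V (V ω) := by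
      unfold pmfProb
      refine Finset.sum_le_sum fun ω' _ => ?_
      by_cases hw : W ω' = W ω
      · simp [hw, h ω' ω hw]
      · simp only [hw, if_false]
        split <;> simp [hp ω']
    have hpos : 0 < pmfProb p W (W ω) := lt_of_lt_of_le h0 (le_pmfProb hp W ω)
    have hlog := Real.log_le_log hpos hWV
    nlinarith

lemma pmfProb_marginal_fst (V : Ω → α) (W : Ω → γ) (c : γ) :
    ∑ a, pmfProb p (fun ω => (V ω, W ω)) (a, c) = pmfProb p W c := by
  unfold pmfProb
  rw [Finset.sum_comm]
  refine Finset.sum_congr rfl fun ω _ => ?_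
  simp [Prod.ext_iff, ite_and]

lemma entH_strongSubadd (hp : ∀ ω, 0 ≤ p ω)
    (A : Ω → α) (B : Ω → β) (C : Ω → γ) :
    entH p (fun ω => (A ω, B ω, C ω)) + entH p C
      ≤ entH p (fun ω => (A ω, C ω)) + entH p (fun ω => (B ω, C ω)) := by
  classical
  set q := pmfProb p (fun ω => (A ω, B ω, C ω)) with hq
  set qac := pmfProb p (fun ω => (A ω, C ω)) with hqac
  set qbc := pmfProb p (fun ω => (B ω, C ω)) with hqbc
  set qc := pmfProb p C with hqc
  set F : α × β × γ → ℝ :=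
    fun v => qac (v.1, v.2.2) * qbc (v.2.1, v.2.2) / (q v * qc v.2.2) with hF
  have key : ∀ ω, p ω * (-Real.log (q (A ω, B ω, C ω))) + p ω * (-Real.log (qc (C ω)))
      - p ω * (-Real.log (qac (A ω, C ω))) - p ω * (-Real.log (qbc (B ω, C ω)))
      ≤ p ω * F (A ω, B ω, C ω) - p ω := by
    intro ω
    rcases eq_or_lt_of_le (hp ω) with h0 | h0
    · simp [← h0]
    · have hqpos : 0 < q (A ω, B ω, C ω) := lt_of_lt_of_le h0 (le_pmfProb hp _ ω)
      have hacpos : 0 < qac (A ω, C ω) := lt_of_lt_of_le h0 (le_pmfProb hp _ ω)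
      have hbcpos : 0 < qbc (B ω, C ω) := lt_of_lt_of_le h0 (le_pmfProb hp _ ω)
      have hcpos : 0 < qc (C ω) := lt_of_lt_of_le h0 (le_pmfProb hp _ ω)
      have hFpos : 0 < F (A ω, B ω, C ω) := by
        rw [hF]
        positivity
      have hlog : Real.log (F (A ω, B ω, C ω)) ≤ F (A ω, B ω, C ω) - 1 :=
        Real.log_le_sub_one_of_pos hFpos
      have hexp : Real.log (F (A ω, B ω, C ω))
          = Real.log (qac (A ω, C ω)) + Real.log (qbc (B ω, C ω))
            - Real.log (q (A ω, B ω, C ω)) - Real.log (qc (C ω)) := by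
        rw [hF]
        dsimp only
        rw [Real.log_div (by positivity) (by positivity),
          Real.log_mul (ne_of_gt hacpos) (ne_of_gt hbcpos),
          Real.log_mul (ne_of_gt hqpos) (ne_of_gt hcpos)]
        ring
      nlinarith [mul_le_mul_of_nonneg_left hlog (le_of_lt h0)]
  have hsumF : ∑ ω, p ω * F (A ω, B ω, C ω) ≤ ∑ ω, p ω := by
    rw [← sum_fiber (p := p) (fun ω => (A ω, B ω, C ω)) F]
    have step1 : ∀ v : α × β × γ,
        q v * F v ≤ qac (v.1, v.2.2) * qbc (v.2.1, v.2.2) / qc v.2.2 := by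
      intro v
      by_cases h : q v = 0
      · rw [h, zero_mul]
        have := pmfProb_nonneg hp (fun ω => (A ω, C ω)) (v.1, v.2.2)
        have := pmfProb_nonneg hp (fun ω => (B ω, C ω)) (v.2.1, v.2.2)
        have := pmfProb_nonneg hp C v.2.2
        positivity
      · by_cases hc : qc v.2.2 = 0
        · rw [hF]; dsimp only
          rw [hc]; simp
        · rw [hF]; dsimp only
          rw [mul_comm (q v) (qc v.2.2), ← div_div, mul_div_cancel₀ _ h]
    calc ∑ v : α × β × γ, q v * F v
        ≤ ∑ v : α × β × γ, qac (v.1, v.2.2) * qbc (v.2.1, v.2.2) / qc v.2.2 :=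
          Finset.sum_le_sum fun v _ => step1 v
      _ = ∑ c, (∑ a, qac (a, c)) * (∑ b, qbc (b, c)) / qc c := by
          rw [Fintype.sum_prod_type]
          simp only [Fintype.sum_prod_type]
          rw [show (∑ a, ∑ b, ∑ c, qac (a, c) * qbc (b, c) / qc c)
              = ∑ a, ∑ c, ∑ b, qac (a, c) * qbc (b, c) / qc c from
            Finset.sum_congr rfl fun a _ => Finset.sum_comm, Finset.sum_comm]
          refine Finset.sum_congr rfl fun c _ => ?_
          simp only [mul_div_assoc, ← Finset.mul_sum, ← Finset.sum_div, ← Finset.sum_mul]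
      _ ≤ ∑ c, qc c := by
          refine Finset.sum_le_sum fun c _ => ?_
          rw [hqac, hqbc, pmfProb_marginal_fst A C c, pmfProb_marginal_fst B C c, ← hqc]
          by_cases hc : qc c = 0
          · rw [hc, div_zero]
          · rw [mul_div_assoc, div_self hc, mul_one]
      _ = ∑ ω, p ω := sum_pmfProb C
  rw [entH_eq (fun ω => (A ω, B ω, C ω)), entH_eq C,
    entH_eq (fun ω => (A ω, C ω)), entH_eq (fun ω => (B ω, C ω))]
  have h1 : ∑ ω, (p ω * -Real.log (q (A ω, B ω, C ω)) + p ω * -Real.log (qc (C ω))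
      - p ω * -Real.log (qac (A ω, C ω)) - p ω * -Real.log (qbc (B ω, C ω)))
      ≤ ∑ ω, (p ω * F (A ω, B ω, C ω) - p ω) := Finset.sum_le_sum fun ω _ => key ω
  simp only [Finset.sum_sub_distrib, Finset.sum_add_distrib] at h1
  linarith [hsumF]

lemma condH_nonneg (hp : ∀ ω, 0 ≤ p ω) (A : Ω → α) (B : Ω → β) :
    0 ≤ condH p A B := by
  have := entH_mono (p := p) hp (V := B) (W := fun ω => (A ω, B ω))
    (fun ω ω' h => congrArg Prod.snd h)
  unfold condH
  linarith

lemma condH_chain (A : Ω → α) (B : Ω → β) (C : Ω → γ) :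
    condH p (fun ω => (A ω, B ω)) C
      = condH p A (fun ω => (B ω, C ω)) + condH p B C := by
  unfold condH
  have h : entH p (fun ω => ((A ω, B ω), C ω)) = entH p (fun ω => (A ω, B ω, C ω)) :=
    entH_congr (by intro ω ω'; simp only [Prod.ext_iff]; tauto)
  rw [h]
  ring

lemma condH_cond_reduce (hp : ∀ ω, 0 ≤ p ω) (A : Ω → α) (B : Ω → β) (C : Ω → γ) :
    condH p A (fun ω => (B ω, C ω)) ≤ condH p A C := by
  have h := entH_strongSubadd hp A B C
  unfold condH
  linarith

lemma condH_mono_left (hp : ∀ ω, 0 ≤ p ω) (A : Ω → α) (B : Ω → β) (C : Ω → γ) :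
    condH p A C ≤ condH p (fun ω => (A ω, B ω)) C := by
  unfold condH
  have := entH_mono (p := p) hp (V := fun ω => (A ω, C ω))
    (W := fun ω => ((A ω, B ω), C ω))
    (fun ω ω' h => by
      simp only [Prod.ext_iff] at *
      exact ⟨h.1.1, h.2⟩)
  linarith

lemma condH_congr_right {A : Ω → α} {B : Ω → β} {B' : Ω → γ}
    (h : ∀ ω ω', B ω = B ω' ↔ B' ω = B' ω') : condH p A B = condH p A B' := by
  unfold condH
  have e1 : entH p (fun ω => (A ω, B ω)) = entH p (fun ω => (A ω, B' ω)) :=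
    entH_congr (fun ω ω' => by simp only [Prod.ext_iff, h ω ω'])
  rw [e1, entH_congr h]

end entropyHelpers


/-- Auxiliary: entropy of `(Y_T, X)` for a subset `T` of indices. -/
noncomputable def fEnt {Ω α β : Type*} [Fintype Ω] [Fintype α] [DecidableEq α]
    [Fintype β] [DecidableEq β] {k : ℕ} (p : Ω → ℝ) (X : Ω → β) (Y : Fin k → Ω → α)
    (T : Finset (Fin k)) : ℝ :=
  entH p (fun ω => ((fun j : ↥T => Y j.1 ω), X ω))

section fEntLemmas
variable {Ω α β : Type*} [Fintype Ω] [Fintype α] [DecidableEq α] [Fintype β] [DecidableEq β]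
  {k : ℕ} {p : Ω → ℝ} (X : Ω → β) (Y : Fin k → Ω → α)

lemma tupleEq_iff (T : Finset (Fin k)) (ω ω' : Ω) :
    (fun j : ↥T => Y j.1 ω) = (fun j : ↥T => Y j.1 ω') ↔ ∀ j ∈ T, Y j ω = Y j ω' := by
  constructor
  · intro h j hj
    exact congrFun h ⟨j, hj⟩
  · intro h
    funext j
    exact h j.1 j.2

lemma fEnt_mono (hp : ∀ ω, 0 ≤ p ω) {T U : Finset (Fin k)} (hTU : T ⊆ U) :
    fEnt p X Y T ≤ fEnt p X Y U := by
  unfold fEnt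
  refine entH_mono hp fun ω ω' h => ?_
  simp only [Prod.ext_iff] at h ⊢
  obtain ⟨h1, h2⟩ := h
  refine ⟨?_, h2⟩
  rw [tupleEq_iff] at h1 ⊢
  exact fun j hj => h1 j (hTU hj)

lemma fEnt_step (hp : ∀ ω, 0 ≤ p ω) {T U : Finset (Fin k)} (hTU : T ⊆ U)
    {i : Fin k} (hi : i ∉ U) :
    fEnt p X Y (insert i U) + fEnt p X Y T ≤ fEnt p X Y (insert i T) + fEnt p X Y U := by
  classical
  have h := entH_strongSubadd (p := p) hp (fun ω => Y i ω)
    (fun ω (j : ↥(U \ T)) => Y j.1 ω)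
    (fun ω => ((fun j : ↥T => Y j.1 ω), X ω))
  have e1 : entH p (fun ω => (Y i ω, (fun j : ↥(U \ T) => Y j.1 ω),
        ((fun j : ↥T => Y j.1 ω), X ω))) = fEnt p X Y (insert i U) := by
    refine entH_congr fun ω ω' => ?_
    simp only [Prod.ext_iff, tupleEq_iff]
    constructor
    · rintro ⟨h1, h2, h3, h4⟩
      refine ⟨fun j hj => ?_, h4⟩
      rcases Finset.mem_insert.mp hj with rfl | hj
      · exact h1
      · by_cases hjT : j ∈ T
        · exact h3 j hjT
        · exact h2 j (Finset.mem_sdiff.mpr ⟨hj, hjT⟩)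
    · rintro ⟨h1, h4⟩
      exact ⟨h1 i (Finset.mem_insert_self _ _),
        fun j hj => h1 j (Finset.mem_insert_of_mem (Finset.mem_sdiff.mp hj).1),
        fun j hj => h1 j (Finset.mem_insert_of_mem (hTU hj)), h4⟩
  have e2 : entH p (fun ω => (Y i ω, ((fun j : ↥T => Y j.1 ω), X ω)))
      = fEnt p X Y (insert i T) := by
    refine entH_congr fun ω ω' => ?_
    simp only [Prod.ext_iff, tupleEq_iff]
    constructor
    · rintro ⟨h1, h3, h4⟩
      refine ⟨fun j hj => ?_, h4⟩
      rcases Finset.mem_insert.mp hj with rfl | hj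
      · exact h1
      · exact h3 j hj
    · rintro ⟨h1, h4⟩
      exact ⟨h1 i (Finset.mem_insert_self _ _),
        fun j hj => h1 j (Finset.mem_insert_of_mem hj), h4⟩
  have e3 : entH p (fun ω => ((fun j : ↥(U \ T) => Y j.1 ω),
        ((fun j : ↥T => Y j.1 ω), X ω))) = fEnt p X Y U := by
    refine entH_congr fun ω ω' => ?_
    simp only [Prod.ext_iff, tupleEq_iff]
    constructor
    · rintro ⟨h2, h3, h4⟩
      refine ⟨fun j hj => ?_, h4⟩
      by_cases hjT : j ∈ T
      · exact h3 j hjT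
      · exact h2 j (Finset.mem_sdiff.mpr ⟨hj, hjT⟩)
    · rintro ⟨h1, h4⟩
      exact ⟨fun j hj => h1 j (Finset.mem_sdiff.mp hj).1,
        fun j hj => h1 j (hTU hj), h4⟩
  rw [e1, e2, e3] at h
  have e4 : entH p (fun ω => ((fun j : ↥T => Y j.1 ω), X ω)) = fEnt p X Y T := rfl
  rw [e4] at h
  linarith

end fEntLemmas

lemma count_mem_powersetCard {k r : ℕ} (hr : 1 ≤ r) (i : Fin k) :
    ((Finset.powersetCard r (Finset.univ : Finset (Fin k))).filter
      (fun S => i ∈ S)).card = (k - 1).choose (r - 1) := by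
  classical
  have himg : (Finset.powersetCard r (Finset.univ : Finset (Fin k))).filter
      (fun S => i ∈ S)
      = (Finset.powersetCard (r - 1) (Finset.univ.erase i)).image (insert i) := by
    ext S
    simp only [Finset.mem_filter, Finset.mem_powersetCard, Finset.mem_image]
    constructor
    · rintro ⟨⟨hsub, hcard⟩, hiS⟩
      refine ⟨S.erase i, ⟨?_, ?_⟩, Finset.insert_erase hiS⟩
      · exact fun x hx => Finset.mem_erase.mpr
          ⟨(Finset.mem_erase.mp hx).1, Finset.mem_univ x⟩
      · rw [Finset.card_erase_of_mem hiS, hcard]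
    · rintro ⟨T, ⟨hT, hTcard⟩, rfl⟩
      have hiT : i ∉ T := fun h => (Finset.mem_erase.mp (hT h)).1 rfl
      refine ⟨⟨Finset.subset_univ _, ?_⟩, Finset.mem_insert_self _ _⟩
      rw [Finset.card_insert_of_notMem hiT, hTcard, Nat.sub_add_cancel hr]
  rw [himg, Finset.card_image_of_injOn, Finset.card_powersetCard,
    Finset.card_erase_of_mem (Finset.mem_univ i), Finset.card_univ, Fintype.card_fin]
  intro S hS T hT hST
  rw [Finset.mem_coe, Finset.mem_powersetCard] at hS hT
  have hiS : i ∉ S := fun h => (Finset.mem_erase.mp (hS.1 h)).1 rfl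
  have hiT : i ∉ T := fun h => (Finset.mem_erase.mp (hT.1 h)).1 rfl
  rw [← Finset.erase_insert hiS, ← Finset.erase_insert hiT, hST]

/-- if `M` is determined by `Y_{[k]}` (i.e. `H(M | Y_{[k]}) = 0`), then for
every `1 ≤ r ≤ k`,
`∑_{|S| = r} H(M | Y_S, X) ≤ ((k-r)/k) * C(k,r) * H(Y_{[k]} | X)`. -/
theorem sum_condEntropy_message_le {Ω α β μ : Type*} [Fintype Ω] [Fintype α]
    [DecidableEq α] [Fintype β] [DecidableEq β] [Fintype μ] [DecidableEq μ]
    (p : Ω → ℝ) (hp : ∀ ω, 0 ≤ p ω) (hp1 : ∑ ω, p ω = 1)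
    (k : ℕ) (X : Ω → β) (Y : Fin k → Ω → α) (M : Ω → μ)
    (hM : condH p M (fun ω (j : Fin k) => Y j ω) = 0)
    (r : ℕ) (hr1 : 1 ≤ r) (hrk : r ≤ k) :
    ∑ S ∈ Finset.powersetCard r (Finset.univ : Finset (Fin k)),
        condH p M (fun ω => ((fun j : ↥S => Y j.1 ω), X ω))
      ≤ ((k : ℝ) - (r : ℝ)) / (k : ℝ) * (k.choose r : ℝ)
          * condH p (fun ω (j : Fin k) => Y j ω) X := by
  classical
  have hk : 0 < k := lt_of_lt_of_le hr1 hrk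
  set YY : Ω → (Fin k → α) := fun ω (j : Fin k) => Y j ω with hYYdef
  set P := Finset.powersetCard r (Finset.univ : Finset (Fin k)) with hP
  -- Step A: per-subset bound
  have stepA : ∀ S ∈ P, condH p M (fun ω => ((fun j : ↥S => Y j.1 ω), X ω))
      ≤ fEnt p X Y Finset.univ - fEnt p X Y S := by
    intro S _
    set yS : Ω → (↥S → α) × β := fun ω => ((fun j : ↥S => Y j.1 ω), X ω) with hyS
    have h1 : condH p M yS ≤ condH p (fun ω => (M ω, YY ω)) yS :=
      condH_mono_left hp M YY yS
    have h2 : condH p (fun ω => (M ω, YY ω)) yS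
        = condH p M (fun ω => (YY ω, yS ω)) + condH p YY yS := condH_chain M YY yS
    have h3 : condH p M (fun ω => (YY ω, yS ω)) = condH p M (fun ω => (yS ω, YY ω)) :=
      condH_congr_right (fun ω ω' => by simp only [Prod.ext_iff]; tauto)
    have h4 : condH p M (fun ω => (yS ω, YY ω)) ≤ condH p M YY :=
      condH_cond_reduce hp M yS YY
    have h6 : condH p YY yS = fEnt p X Y Finset.univ - fEnt p X Y S := by
      unfold condH fEnt
      have e : entH p (fun ω => (YY ω, yS ω))
          = entH p (fun ω => ((fun j : ↥(Finset.univ : Finset (Fin k)) => Y j.1 ω), X ω)) := by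
        refine entH_congr fun ω ω' => ?_
        simp only [hyS, hYYdef, Prod.ext_iff, funext_iff, Subtype.forall]
        constructor
        · rintro ⟨h1', _, h4'⟩
          exact ⟨fun j _ => h1' j, h4'⟩
        · rintro ⟨h1', h4'⟩
          exact ⟨fun j => h1' j (Finset.mem_univ j),
            fun j hj => h1' j (Finset.mem_univ j), h4'⟩
      rw [e]
    rw [h2, h3] at h1
    rw [hM] at h4
    linarith
  -- prefix sets and telescoping
  set pfx : ℕ → Finset (Fin k) := fun n => Finset.univ.filter (fun j => j.val < n) with hpfx
  have hpfx0 : pfx 0 = ∅ := by simp [hpfx]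
  have hpfxk : pfx k = Finset.univ := by
    ext j; simp [hpfx, j.isLt]
  have hpfxsucc : ∀ i : Fin k, pfx (i.val + 1) = insert i (pfx i.val) := by
    intro i
    ext j
    simp only [hpfx, Finset.mem_filter, Finset.mem_univ, true_and, Finset.mem_insert,
      Nat.lt_succ_iff_lt_or_eq, Fin.ext_iff]
    tauto
  have hnotmem : ∀ i : Fin k, i ∉ pfx i.val := by
    intro i; simp [hpfx]
  set g : ℕ → ℝ := fun n => fEnt p X Y (pfx n) with hg
  have hDsum : ∑ i : Fin k, (g (i.val + 1) - g i.val)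
      = fEnt p X Y Finset.univ - fEnt p X Y ∅ := by
    rw [Fin.sum_univ_eq_sum_range (fun n => g (n + 1) - g n) k,
      Finset.sum_range_sub g k, hg]
    simp only [hpfx0, hpfxk]
  -- Han per subset
  have hanS : ∀ S ∈ P,
      ∑ i : Fin k, (if i ∈ S then g (i.val + 1) - g i.val else 0)
        ≤ fEnt p X Y S - fEnt p X Y ∅ := by
    intro S _
    set gS : ℕ → ℝ := fun n => fEnt p X Y (S ∩ pfx n) with hgS
    have htel : ∑ i : Fin k, (gS (i.val + 1) - gS i.val)
        = fEnt p X Y S - fEnt p X Y ∅ := by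
      rw [Fin.sum_univ_eq_sum_range (fun n => gS (n + 1) - gS n) k,
        Finset.sum_range_sub gS k, hgS]
      simp only [hpfx0, hpfxk, Finset.inter_univ, Finset.inter_empty]
    rw [← htel]
    refine Finset.sum_le_sum fun i _ => ?_
    by_cases hiS : i ∈ S
    · simp only [hiS, if_true]
      have hins : S ∩ pfx (i.val + 1) = insert i (S ∩ pfx i.val) := by
        rw [hpfxsucc i]
        ext j
        simp only [Finset.mem_inter, Finset.mem_insert]
        constructor
        · rintro ⟨hjS, hj | hj⟩
          · exact Or.inl hj
          · exact Or.inr ⟨hjS, hj⟩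
        · rintro (rfl | ⟨hjS, hj⟩)
          · exact ⟨hiS, Or.inl rfl⟩
          · exact ⟨hjS, Or.inr hj⟩
      have hstep := fEnt_step X Y hp (T := S ∩ pfx i.val) (U := pfx i.val)
        Finset.inter_subset_right (hnotmem i)
      rw [← hpfxsucc i, ← hins] at hstep
      simp only [hgS, hg]
      linarith
    · simp only [hiS, if_false]
      have heq : S ∩ pfx (i.val + 1) = S ∩ pfx i.val := by
        rw [hpfxsucc i]
        ext j
        simp only [Finset.mem_inter, Finset.mem_insert]
        constructor
        · rintro ⟨hjS, rfl | hj⟩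
          · exact absurd hjS hiS
          · exact ⟨hjS, hj⟩
        · rintro ⟨hjS, hj⟩
          exact ⟨hjS, Or.inr hj⟩
      simp only [hgS, heq, sub_self, le_refl]
  -- sum Han over subsets
  have hHan : ((k - 1).choose (r - 1) : ℝ)
        * (fEnt p X Y Finset.univ - fEnt p X Y ∅)
      ≤ ∑ S ∈ P, (fEnt p X Y S - fEnt p X Y ∅) := by
    have hswap : ∑ S ∈ P, ∑ i : Fin k, (if i ∈ S then g (i.val + 1) - g i.val else 0)
        = ∑ i : Fin k, ∑ S ∈ P, (if i ∈ S then g (i.val + 1) - g i.val else 0) :=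
      Finset.sum_comm
    have hcount : ∀ i : Fin k,
        ∑ S ∈ P, (if i ∈ S then g (i.val + 1) - g i.val else 0)
          = ((k - 1).choose (r - 1) : ℝ) * (g (i.val + 1) - g i.val) := by
      intro i
      rw [← Finset.sum_filter, Finset.sum_const, hP, count_mem_powersetCard hr1 i,
        nsmul_eq_mul]
    calc ((k - 1).choose (r - 1) : ℝ) * (fEnt p X Y Finset.univ - fEnt p X Y ∅)
        = ∑ i : Fin k, ((k - 1).choose (r - 1) : ℝ) * (g (i.val + 1) - g i.val) := by
          rw [← Finset.mul_sum, hDsum]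
      _ = ∑ S ∈ P, ∑ i : Fin k, (if i ∈ S then g (i.val + 1) - g i.val else 0) := by
          rw [hswap]
          exact Finset.sum_congr rfl fun i _ => (hcount i).symm
      _ ≤ ∑ S ∈ P, (fEnt p X Y S - fEnt p X Y ∅) :=
          Finset.sum_le_sum hanS
  -- identify fEnt univ - fEnt ∅ with condH p YY X
  have hfinal : fEnt p X Y Finset.univ - fEnt p X Y ∅ = condH p YY X := by
    unfold condH fEnt
    have e1 : entH p (fun ω => ((fun j : ↥(Finset.univ : Finset (Fin k)) => Y j.1 ω), X ω))
        = entH p (fun ω => (YY ω, X ω)) := by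
      refine entH_congr fun ω ω' => ?_
      simp only [hYYdef, Prod.ext_iff, funext_iff, Subtype.forall]
      constructor
      · rintro ⟨h1', h4'⟩
        exact ⟨fun j => h1' j (Finset.mem_univ j), h4'⟩
      · rintro ⟨h1', h4'⟩
        exact ⟨fun j _ => h1' j, h4'⟩
    have e2 : entH p (fun ω => ((fun j : ↥(∅ : Finset (Fin k)) => Y j.1 ω), X ω))
        = entH p X := by
      refine entH_congr fun ω ω' => ?_
      simp only [Prod.ext_iff]
      constructor
      · rintro ⟨_, h4'⟩
        exact h4'
      · intro h4'
        exact ⟨Subsingleton.elim _ _, h4'⟩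
    rw [e1, e2]
  -- cardinality of P
  have hcard : (P.card : ℝ) = (k.choose r : ℝ) := by
    rw [hP, Finset.card_powersetCard, Finset.card_univ, Fintype.card_fin]
  -- numeric identity
  have hnum : ((k : ℝ) - (r : ℝ)) / (k : ℝ) * (k.choose r : ℝ)
      = (k.choose r : ℝ) - ((k - 1).choose (r - 1) : ℝ) := by
    have hnat : k * (k - 1).choose (r - 1) = k.choose r * r := by
      have := Nat.add_one_mul_choose_eq (k - 1) (r - 1)
      rwa [Nat.sub_add_cancel hk,
        Nat.sub_add_cancel hr1] at this
    have hkne : (k : ℝ) ≠ 0 := Nat.cast_ne_zero.mpr hk.ne'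
    have hcast : (k : ℝ) * ((k - 1).choose (r - 1) : ℝ) = (k.choose r : ℝ) * (r : ℝ) := by
      exact_mod_cast congrArg (Nat.cast : ℕ → ℝ) hnat
    field_simp
    ring_nf
    nlinarith [hcast]
  -- put everything together
  calc ∑ S ∈ P, condH p M (fun ω => ((fun j : ↥S => Y j.1 ω), X ω))
      ≤ ∑ S ∈ P, (fEnt p X Y Finset.univ - fEnt p X Y S) := Finset.sum_le_sum stepA
    _ = (P.card : ℝ) * (fEnt p X Y Finset.univ - fEnt p X Y ∅)
        - ∑ S ∈ P, (fEnt p X Y S - fEnt p X Y ∅) := by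
        rw [Finset.sum_sub_distrib, Finset.sum_sub_distrib, Finset.sum_const,
          Finset.sum_const, nsmul_eq_mul, nsmul_eq_mul]
        ring
    _ ≤ (P.card : ℝ) * (fEnt p X Y Finset.univ - fEnt p X Y ∅)
        - ((k - 1).choose (r - 1) : ℝ) * (fEnt p X Y Finset.univ - fEnt p X Y ∅) := by
        linarith
    _ = ((k : ℝ) - (r : ℝ)) / (k : ℝ) * (k.choose r : ℝ) * condH p YY X := by
        rw [hfinal, hcard, hnum]
        ring
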